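/- Let N ≥ 5, ω = exp(2πi/N), and define ξ_{ij} ∈ ℂ^N as above and set v_{ij} = |ξ_{ij}⟩⟨ξ_{ij}| ∈ M_N(ℂ). Then v = (v_{ij}) is a magic unitary: each v_{ij} is an orthogonal projection and for each i, Σ_j v_{ij} = 1, and for each j, Σ_i v_{ij} = 1. -/

import Mathlib

open Complex Matrix

/-- `ω = exp(2πi/N)`. -/
noncomputable def omegaN (N : ℕ) : ℂ := Complex.exp (2 * Real.pi * Complex.I / N)

lemma omegaN_ne_zero (N : ℕ) : omegaN N ≠ 0 := Complex.exp_ne_zero _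

lemma omegaN_prim (N : ℕ) (hN : N ≠ 0) : IsPrimitiveRoot (omegaN N) N :=
  Complex.isPrimitiveRoot_exp N hN

lemma conj_omegaN (N : ℕ) : (starRingEnd ℂ) (omegaN N) = (omegaN N)⁻¹ := by
  rw [omegaN, ← Complex.exp_conj, ← Complex.exp_neg]
  congr 1
  have : (starRingEnd ℂ) 2 = 2 := map_ofNat _ 2
  simp [map_div₀, Complex.conj_ofReal, this]
  ring

lemma conj_omega_zpow (N : ℕ) (b : ℤ) :
    (starRingEnd ℂ) (omegaN N ^ b) = omegaN N ^ (-b) := by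
  rw [map_zpow₀, conj_omegaN, _root_.zpow_neg, _root_.inv_zpow]

/-- The vector `ξ_{ij} ∈ ℂ^N`: coordinate `p` (for `p = 1, …, N`, encoded as `p : Fin N`
with value `p+1`) is `ω^{1-j}/√N` if `p = 1`, `ω^{i-1}/√N` if `p = N`,
and `ω^{p(i-j)}/√N` otherwise. -/
noncomputable def xiVec (N : ℕ) (i j : ℤ) : EuclideanSpace ℂ (Fin N) :=
  WithLp.toLp 2 fun p =>
    if (p : ℕ) = 0 then omegaN N ^ (1 - j) / (Real.sqrt N : ℂ)
    else if (p : ℕ) = N - 1 then omegaN N ^ (i - 1) / (Real.sqrt N : ℂ)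
    else omegaN N ^ ((((p : ℕ) : ℤ) + 1) * (i - j)) / (Real.sqrt N : ℂ)

def expE (N : ℕ) (i j : ℤ) (p : Fin N) : ℤ :=
  if (p : ℕ) = 0 then 1 - j
  else if (p : ℕ) = N - 1 then i - 1
  else (((p : ℕ) : ℤ) + 1) * (i - j)

lemma xiVec_eq (N : ℕ) (i j : ℤ) (p : Fin N) :
    xiVec N i j p = omegaN N ^ (expE N i j p) / (Real.sqrt N : ℂ) := by
  simp only [xiVec, expE]
  split_ifs <;> rfl

lemma expE_zero {N : ℕ} {p : Fin N} (h : (p : ℕ) = 0) (i j : ℤ) :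
    expE N i j p = 1 - j := by simp [expE, h]

lemma expE_last {N : ℕ} {p : Fin N} (h : (p : ℕ) = N - 1) (h0 : (p : ℕ) ≠ 0) (i j : ℤ) :
    expE N i j p = i - 1 := by simp only [expE, if_neg h0]; rw [if_pos h]

lemma expE_mid {N : ℕ} {p : Fin N} (h0 : (p : ℕ) ≠ 0) (h1 : (p : ℕ) ≠ N - 1) (i j : ℤ) :
    expE N i j p = (((p : ℕ) : ℤ) + 1) * (i - j) := by simp [expE, h0, h1]

lemma xi_mul_conj (N : ℕ) (hN : N ≠ 0) (i j i' j' : ℤ) (p q : Fin N) :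
    xiVec N i j p * (starRingEnd ℂ) (xiVec N i' j' q)
      = omegaN N ^ (expE N i j p - expE N i' j' q) / (N : ℂ) := by
  rw [xiVec_eq, xiVec_eq, map_div₀, conj_omega_zpow, Complex.conj_ofReal,
    div_mul_div_comm, ← zpow_add₀ (omegaN_ne_zero N), ← Complex.ofReal_mul,
    Real.mul_self_sqrt (by positivity), sub_eq_add_neg]
  norm_num

lemma sum_omega (N : ℕ) (hN : 5 ≤ N) (c d : ℤ) (hd : ¬((N : ℤ) ∣ d)) :
    ∑ t : Fin N, omegaN N ^ (c + d * (((t : ℕ) : ℤ) + 1)) = 0 := by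
  have hω := omegaN_ne_zero N
  have hprim := omegaN_prim N (by omega)
  have hx1 : omegaN N ^ d ≠ 1 := fun h => hd ((hprim.zpow_eq_one_iff_dvd d).mp h)
  have hxN : (omegaN N ^ d) ^ N = 1 := by
    rw [← zpow_natCast (omegaN N ^ d), ← _root_.zpow_mul, mul_comm, _root_.zpow_mul, zpow_natCast,
      hprim.pow_eq_one, _root_.one_zpow]
  have key : ∀ t : Fin N, omegaN N ^ (c + d * (((t : ℕ) : ℤ) + 1))
      = omegaN N ^ (c + d) * (omegaN N ^ d) ^ (t : ℕ) := by
    intro t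
    rw [← zpow_natCast (omegaN N ^ d), ← _root_.zpow_mul, ← zpow_add₀ hω]
    congr 1
    ring
  rw [Finset.sum_congr rfl fun t _ => key t, ← Finset.mul_sum]
  have : ∑ t : Fin N, (omegaN N ^ d) ^ (t : ℕ) = 0 := by
    rw [Fin.sum_univ_eq_sum_range fun k => (omegaN N ^ d) ^ k, geom_sum_eq hx1, hxN,
      sub_self, zero_div]
  rw [this, mul_zero]

lemma sum_div_zero (N : ℕ) (hN : 5 ≤ N) (c d : ℤ) (hd0 : d ≠ 0) (hdlt : d.natAbs < N)
    (f : Fin N → ℤ) (hf : ∀ t, f t = c + d * (((t : ℕ) : ℤ) + 1)) :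
    ∑ t : Fin N, omegaN N ^ (f t) / (N : ℂ) = 0 := by
  have hd : ¬((N : ℤ) ∣ d) := fun h =>
    hd0 (Int.eq_zero_of_dvd_of_natAbs_lt_natAbs h (by simpa using hdlt))
  rw [← Finset.sum_div, Finset.sum_congr rfl fun t _ => by rw [hf t],
    sum_omega N hN c d hd, zero_div]

/-- The matrix of the rank-one projection `|ξ_{ij}⟩⟨ξ_{ij}|` onto the span of `ξ_{ij}`:
`(v_{ij})_{pq} = ξ_{ij}(p) ⋅ conj (ξ_{ij}(q))`, so that `v_{ij} x = ⟨ξ_{ij}, x⟩ ξ_{ij}`. -/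
noncomputable def flatV (N : ℕ) (i j : Fin N) : Matrix (Fin N) (Fin N) ℂ :=
  Matrix.of fun p q =>
    xiVec N (((i : ℕ) : ℤ) + 1) (((j : ℕ) : ℤ) + 1) p *
      (starRingEnd ℂ) (xiVec N (((i : ℕ) : ℤ) + 1) (((j : ℕ) : ℤ) + 1) q)

theorem flatV_magic_unitary (N : ℕ) (hN : 5 ≤ N) :
    (∀ i j : Fin N, (flatV N i j)ᴴ = flatV N i j ∧ flatV N i j * flatV N i j = flatV N i j)
    ∧ (∀ i : Fin N, ∑ j, flatV N i j = 1)
    ∧ (∀ j : Fin N, ∑ i, flatV N i j = 1) := by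
  have hN0 : N ≠ 0 := by omega
  have hNC : (N : ℂ) ≠ 0 := Nat.cast_ne_zero.mpr hN0
  have hnorm : ∀ i j : ℤ,
      ∑ r : Fin N, xiVec N i j r * (starRingEnd ℂ) (xiVec N i j r) = 1 := by
    intro i j
    rw [Finset.sum_congr rfl fun r _ => xi_mul_conj N hN0 i j i j r r]
    simp only [sub_self, zpow_zero]
    rw [Finset.sum_const, Finset.card_univ, Fintype.card_fin, nsmul_eq_mul]
    field_simp
  refine ⟨fun i j => ⟨?_, ?_⟩, fun i => ?_, fun j => ?_⟩
  · ext p q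
    simp only [flatV, Matrix.conjTranspose_apply, Matrix.of_apply, Complex.star_def,
      _root_.map_mul, Complex.conj_conj]
    ring
  · ext p q
    rw [Matrix.mul_apply]
    have step : ∀ r : Fin N, flatV N i j p r * flatV N i j r q
        = (xiVec N (((i : ℕ) : ℤ) + 1) (((j : ℕ) : ℤ) + 1) p *
            (starRingEnd ℂ) (xiVec N (((i : ℕ) : ℤ) + 1) (((j : ℕ) : ℤ) + 1) q)) *
          (xiVec N (((i : ℕ) : ℤ) + 1) (((j : ℕ) : ℤ) + 1) r *
            (starRingEnd ℂ) (xiVec N (((i : ℕ) : ℤ) + 1) (((j : ℕ) : ℤ) + 1) r)) := by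
      intro r
      simp only [flatV, Matrix.of_apply]
      ring
    rw [Finset.sum_congr rfl fun r _ => step r, ← Finset.mul_sum, hnorm, mul_one]
    rfl
  · -- row sums
    ext p q
    rw [Matrix.sum_apply, Matrix.one_apply]
    simp only [flatV, Matrix.of_apply]
    rw [Finset.sum_congr rfl fun t _ => xi_mul_conj N hN0 _ _ _ _ p q]
    have hplt := p.isLt
    have hqlt := q.isLt
    by_cases hpq : p = q
    · subst hpq
      rw [if_pos rfl]
      simp only [sub_self, zpow_zero]
      rw [Finset.sum_const, Finset.card_univ, Fintype.card_fin, nsmul_eq_mul]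
      field_simp
    · rw [if_neg hpq]
      have hvne : (p : ℕ) ≠ (q : ℕ) := fun h => hpq (Fin.ext h)
      by_cases hp0 : (p : ℕ) = 0
      · by_cases hq0 : (q : ℕ) = 0
        · omega
        · by_cases hqN : (q : ℕ) = N - 1
          · simp only [expE_zero hp0, expE_last hqN hq0]
            exact sum_div_zero N hN (1 - ((i : ℕ) : ℤ)) (-1) (by omega) (by omega) _
              (fun t => by ring)
          · simp only [expE_zero hp0, expE_mid hq0 hqN]
            exact sum_div_zero N hN (1 - (((q : ℕ) : ℤ) + 1) * (((i : ℕ) : ℤ) + 1))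
              ((q : ℕ) : ℤ) (by omega) (by omega) _ (fun t => by ring)
      · by_cases hpN : (p : ℕ) = N - 1
        · by_cases hq0 : (q : ℕ) = 0
          · simp only [expE_last hpN hp0, expE_zero hq0]
            exact sum_div_zero N hN (((i : ℕ) : ℤ) - 1) 1 (by omega) (by omega) _
              (fun t => by ring)
          · by_cases hqN : (q : ℕ) = N - 1
            · omega
            · simp only [expE_last hpN hp0, expE_mid hq0 hqN]
              exact sum_div_zero N hN (-((q : ℕ) : ℤ) * (((i : ℕ) : ℤ) + 1) - 1)
                (((q : ℕ) : ℤ) + 1) (by omega) (by omega) _ (fun t => by ring)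
        · by_cases hq0 : (q : ℕ) = 0
          · simp only [expE_mid hp0 hpN, expE_zero hq0]
            exact sum_div_zero N hN ((((p : ℕ) : ℤ) + 1) * (((i : ℕ) : ℤ) + 1) - 1)
              (-((p : ℕ) : ℤ)) (by omega) (by omega) _ (fun t => by ring)
          · by_cases hqN : (q : ℕ) = N - 1
            · simp only [expE_mid hp0 hpN, expE_last hqN hq0]
              exact sum_div_zero N hN (((p : ℕ) : ℤ) * (((i : ℕ) : ℤ) + 1) + 1)
                (-(((p : ℕ) : ℤ) + 1)) (by omega) (by omega) _ (fun t => by ring)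
            · simp only [expE_mid hp0 hpN, expE_mid hq0 hqN]
              exact sum_div_zero N hN ((((p : ℕ) : ℤ) - ((q : ℕ) : ℤ)) * (((i : ℕ) : ℤ) + 1))
                (((q : ℕ) : ℤ) - ((p : ℕ) : ℤ)) (by omega) (by omega) _ (fun t => by ring)
  · -- column sums
    ext p q
    rw [Matrix.sum_apply, Matrix.one_apply]
    simp only [flatV, Matrix.of_apply]
    rw [Finset.sum_congr rfl fun t _ => xi_mul_conj N hN0 _ _ _ _ p q]
    have hplt := p.isLt
    have hqlt := q.isLt
    by_cases hpq : p = q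
    · subst hpq
      rw [if_pos rfl]
      simp only [sub_self, zpow_zero]
      rw [Finset.sum_const, Finset.card_univ, Fintype.card_fin, nsmul_eq_mul]
      field_simp
    · rw [if_neg hpq]
      have hvne : (p : ℕ) ≠ (q : ℕ) := fun h => hpq (Fin.ext h)
      by_cases hp0 : (p : ℕ) = 0
      · by_cases hq0 : (q : ℕ) = 0
        · omega
        · by_cases hqN : (q : ℕ) = N - 1
          · simp only [expE_zero hp0, expE_last hqN hq0]
            exact sum_div_zero N hN (1 - ((j : ℕ) : ℤ)) (-1) (by omega) (by omega) _
              (fun t => by ring)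
          · simp only [expE_zero hp0, expE_mid hq0 hqN]
            exact sum_div_zero N hN (1 + ((q : ℕ) : ℤ) * (((j : ℕ) : ℤ) + 1))
              (-(((q : ℕ) : ℤ) + 1)) (by omega) (by omega) _ (fun t => by ring)
      · by_cases hpN : (p : ℕ) = N - 1
        · by_cases hq0 : (q : ℕ) = 0
          · simp only [expE_last hpN hp0, expE_zero hq0]
            exact sum_div_zero N hN (((j : ℕ) : ℤ) - 1) 1 (by omega) (by omega) _
              (fun t => by ring)
          · by_cases hqN : (q : ℕ) = N - 1
            · omega
            · simp only [expE_last hpN hp0, expE_mid hq0 hqN]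
              exact sum_div_zero N hN ((((q : ℕ) : ℤ) + 1) * (((j : ℕ) : ℤ) + 1) - 1)
                (-((q : ℕ) : ℤ)) (by omega) (by omega) _ (fun t => by ring)
        · by_cases hq0 : (q : ℕ) = 0
          · simp only [expE_mid hp0 hpN, expE_zero hq0]
            exact sum_div_zero N hN (-((p : ℕ) : ℤ) * (((j : ℕ) : ℤ) + 1) - 1)
              (((p : ℕ) : ℤ) + 1) (by omega) (by omega) _ (fun t => by ring)
          · by_cases hqN : (q : ℕ) = N - 1
            · simp only [expE_mid hp0 hpN, expE_last hqN hq0]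
              exact sum_div_zero N hN (1 - (((p : ℕ) : ℤ) + 1) * (((j : ℕ) : ℤ) + 1))
                ((p : ℕ) : ℤ) (by omega) (by omega) _ (fun t => by ring)
            · simp only [expE_mid hp0 hpN, expE_mid hq0 hqN]
              exact sum_div_zero N hN ((((q : ℕ) : ℤ) - ((p : ℕ) : ℤ)) * (((j : ℕ) : ℤ) + 1))
                (((p : ℕ) : ℤ) - ((q : ℕ) : ℤ)) (by omega) (by omega) _ (fun t => by ring)
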